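/- The barycenter of the triangle T'' of osculating-circle centers coincides with the circumcenter of the pre-image triangle T: (P₁'' + P₂'' + P₃'')/3 = (c² cos u/(4a), −c² sin u/(4b)), and this point is equidistant from P₁, P₂ and P₃. -/

import Mathlib

open Real

noncomputable def ellipsePt (a b t : ℝ) : ℝ × ℝ := (a * cos t, b * sin t)

noncomputable def oscCenter (a b t : ℝ) : ℝ × ℝ :=
  ((a ^ 2 - b ^ 2) * (cos t) ^ 3 / a, -((a ^ 2 - b ^ 2) * (sin t) ^ 3 / b))

def sqDist (p q : ℝ × ℝ) : ℝ := (p.1 - q.1) ^ 2 + (p.2 - q.2) ^ 2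

/-- the barycenter of `T''` equals `(c² cos u/(4a), −c² sin u/(4b))`, which is
the circumcenter of the pre-image triangle `T` (equidistant from `P₁, P₂, P₃`). -/
theorem stmt15 (a b u : ℝ) (hb : 0 < b) (hab : b < a)
    (P₁ P₂ P₃ P₁'' P₂'' P₃'' X : ℝ × ℝ)
    (hP₁ : P₁ = ellipsePt a b (-u / 3))
    (hP₂ : P₂ = ellipsePt a b (-u / 3 - 2 * π / 3))
    (hP₃ : P₃ = ellipsePt a b (-u / 3 - 4 * π / 3))
    (hP₁'' : P₁'' = oscCenter a b (-u / 3))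
    (hP₂'' : P₂'' = oscCenter a b (-u / 3 - 2 * π / 3))
    (hP₃'' : P₃'' = oscCenter a b (-u / 3 - 4 * π / 3))
    (hX : X = ((a ^ 2 - b ^ 2) * cos u / (4 * a), -((a ^ 2 - b ^ 2) * sin u / (4 * b)))) :
    ((P₁''.1 + P₂''.1 + P₃''.1) / 3, (P₁''.2 + P₂''.2 + P₃''.2) / 3) = X ∧
    sqDist X P₁ = sqDist X P₂ ∧ sqDist X P₂ = sqDist X P₃ := by

  have ha : (a:ℝ) ≠ 0 := ne_of_gt (hb.trans hab)
  have hbne : (b:ℝ) ≠ 0 := by positivity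
  set t : ℝ := -u / 3 with ht
  set C : ℝ := Real.cos t with hC
  set S : ℝ := Real.sin t with hS
  set r : ℝ := Real.sqrt 3 with hr
  have hpy : S ^ 2 + C ^ 2 = 1 := Real.sin_sq_add_cos_sq t
  have h3 : r ^ 2 = 3 := Real.sq_sqrt (by norm_num)
  -- values at 2π/3 and 4π/3
  have hc23 : Real.cos (2 * π / 3) = -(1/2) := by
    rw [show (2 * π / 3 : ℝ) = π - π / 3 by ring, Real.cos_pi_sub, Real.cos_pi_div_three]
  have hs23 : Real.sin (2 * π / 3) = r / 2 := by
    rw [show (2 * π / 3 : ℝ) = π - π / 3 by ring, Real.sin_pi_sub, Real.sin_pi_div_three, hr]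
  have hc43 : Real.cos (4 * π / 3) = -(1/2) := by
    rw [show (4 * π / 3 : ℝ) = π - (-(π / 3)) by ring, Real.cos_pi_sub, Real.cos_neg,
      Real.cos_pi_div_three]
  have hs43 : Real.sin (4 * π / 3) = -(r / 2) := by
    rw [show (4 * π / 3 : ℝ) = π - (-(π / 3)) by ring, Real.sin_pi_sub, Real.sin_neg,
      Real.sin_pi_div_three, hr]
  have hC2 : Real.cos (t - 2 * π / 3) = -C/2 + r*S/2 := by
    rw [Real.cos_sub, hc23, hs23]; ring
  have hS2 : Real.sin (t - 2 * π / 3) = -S/2 - r*C/2 := by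
    rw [Real.sin_sub, hs23, hc23]; ring
  have hC3 : Real.cos (t - 4 * π / 3) = -C/2 - r*S/2 := by
    rw [Real.cos_sub, hc43, hs43]; ring
  have hS3 : Real.sin (t - 4 * π / 3) = -S/2 + r*C/2 := by
    rw [Real.sin_sub, hs43, hc43]; ring
  have hcu : Real.cos u = 4*C^3 - 3*C := by
    have h := Real.cos_three_mul t
    rw [show (3:ℝ) * t = -u by rw [ht]; ring, Real.cos_neg] at h
    linear_combination h
  have hsu : Real.sin u = -3*S + 4*S^3 := by
    have h := Real.sin_three_mul t
    rw [show (3:ℝ) * t = -u by rw [ht]; ring, Real.sin_neg] at h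
    linear_combination -h
  have harg2 : (-u / 3 - 2 * π / 3 : ℝ) = t - 2 * π / 3 := by rw [ht]
  have harg4 : (-u / 3 - 4 * π / 3 : ℝ) = t - 4 * π / 3 := by rw [ht]
  subst hP₁ hP₂ hP₃ hP₁'' hP₂'' hP₃'' hX
  simp only [ellipsePt, oscCenter, sqDist, harg2, harg4, ← hC, ← hS, hC2, hS2, hC3, hS3,
    hcu, hsu]
  refine ⟨?_, ?_, ?_⟩
  · apply Prod.ext
    · simp only
      field_simp
      linear_combination (-72*C*(a^2-b^2)) * hpy + (-24*C*S^2*(a^2-b^2)) * h3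
    · simp only
      field_simp
      linear_combination (-72*S*(b^2-a^2)) * hpy + (-24*S*C^2*(b^2-a^2)) * h3
  all_goals {
    have hk : (16*(a^2*b^2) : ℝ) ≠ 0 := by positivity
    have key : ∀ Ct St : ℝ,
        16*(a^2*b^2) * (((a^2-b^2)*(4*C^3-3*C)/(4*a) - a*Ct)^2
          + (-((a^2-b^2)*(-3*S+4*S^3)/(4*b)) - b*St)^2)
        = b^2*((a^2-b^2)*(4*C^3-3*C) - 4*a^2*Ct)^2
          + a^2*((a^2-b^2)*(-3*S+4*S^3) + 4*b^2*St)^2 := by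
      intro Ct St
      field_simp
      ring
    apply mul_left_cancel₀ hk
    rw [key, key]
    first
    | linear_combination (12*a^4*b^2 + 48*C^2*a^2*b^4 - 48*C^2*a^4*b^2 - 4*r^2*a^4*b^2
          - 16*S*r*C*a^2*b^4 + 16*S*r*C*a^4*b^2 - 48*S^2*a^2*b^4 + 48*S^2*a^4*b^2) * hpy +
        (-4*a^4*b^2 - 4*C^2*a^2*b^4 + 4*C^2*a^4*b^2) * h3
    | linear_combination (32*S*r*C*a^2*b^4 - 32*S*r*C*a^4*b^2) * hpy }
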